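/- For the random feature map φ_exp(x) = (1/√m)·exp(−‖x‖²/2)·(exp(ω₁ᵀx), …, exp(ω_mᵀx)) with ω₁,…,ω_m drawn i.i.d. from the standard Gaussian N(0, I_d), the expectation E[φ_exp(x)ᵀ φ_exp(y)] equals exp(xᵀy) for all x, y ∈ ℝ^d. In particular, φ_exp provides an unbiased estimator of the softmax (exponential) attention kernel. -/

import Mathlib

open MeasureTheory Real ENNReal NNReal

/-- The standard Gaussian measure `N(0, I_d)` on `ℝ^d`, given by its density
`(2π)^(−d/2) exp(−‖ω‖²/2)` with respect to Lebesgue measure. -/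
noncomputable def stdGaussian (d : ℕ) : Measure (EuclideanSpace ℝ (Fin d)) :=
  volume.withDensity fun ω =>
    ENNReal.ofReal ((2 * Real.pi) ^ (-(d : ℝ) / 2) * Real.exp (-‖ω‖ ^ 2 / 2))

lemma gauss1d_integrable (c : ℝ) : Integrable (fun t : ℝ => Real.exp (-t^2/2 + t*c)) := by
  have h : ∀ t : ℝ, -t^2/2 + t*c = -(1/2) * (t - c)^2 + c^2/2 := by intro t; ring
  simp_rw [h, Real.exp_add]
  exact (((integrable_exp_neg_mul_sq (by norm_num : (0:ℝ) < 1/2)).comp_sub_right c)).mul_const _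

lemma gauss1d (c : ℝ) :
    ∫ t : ℝ, (2*Real.pi) ^ (-(1:ℝ)/2) * Real.exp (-t^2/2 + t*c) = Real.exp (c^2/2) := by
  have h : ∀ t : ℝ, -t^2/2 + t*c = -(1/2) * (t - c)^2 + c^2/2 := by intro t; ring
  simp_rw [h, Real.exp_add, ← mul_assoc]
  rw [integral_mul_const, integral_const_mul,
    integral_sub_right_eq_self (fun t => Real.exp (-(1/2) * t^2)) c, integral_gaussian]
  have : (2*Real.pi) ^ (-(1:ℝ)/2) * Real.sqrt (π / (1/2)) = 1 := by
    rw [show π / (1/2) = 2 * π by ring, Real.sqrt_eq_rpow, ← Real.rpow_add (by positivity)]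
    norm_num
  rw [this, one_mul]
lemma norm_sq_eq (d : ℕ) (x : EuclideanSpace ℝ (Fin d)) : ‖x‖^2 = ∑ i, (x i)^2 := by
  rw [EuclideanSpace.norm_eq, Real.sq_sqrt (by positivity)]
  exact Finset.sum_congr rfl (fun i _ => by rw [Real.norm_eq_abs, sq_abs])

lemma key_eq (d : ℕ) (v : EuclideanSpace ℝ (Fin d)) (a : Fin d → ℝ) :
    (2*Real.pi) ^ (-(d:ℝ)/2) *
      Real.exp (-‖(MeasurableEquiv.toLp 2 (Fin d → ℝ)) a‖^2/2) *
      Real.exp ((inner ℝ ((MeasurableEquiv.toLp 2 (Fin d → ℝ)) a) v : ℝ))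
    = ∏ i, ((2*Real.pi) ^ (-(1:ℝ)/2) * Real.exp (-(a i)^2/2 + a i * v i)) := by
  rw [Finset.prod_mul_distrib, Finset.prod_const, ← Real.exp_sum]
  have h1 : ((2*Real.pi) ^ (-(1:ℝ)/2)) ^ (Finset.univ : Finset (Fin d)).card
      = (2*Real.pi) ^ (-(d:ℝ)/2) := by
    rw [Finset.card_univ, Fintype.card_fin, ← Real.rpow_natCast ((2*Real.pi) ^ (-(1:ℝ)/2)) d,
      ← Real.rpow_mul (by positivity)]
    ring_nf
  rw [h1, mul_assoc, ← Real.exp_add]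
  congr 2
  have ha : ‖(MeasurableEquiv.toLp 2 (Fin d → ℝ)) a‖^2 = ∑ i, (a i)^2 := by
    rw [norm_sq_eq]; rfl
  have hi : (inner ℝ ((MeasurableEquiv.toLp 2 (Fin d → ℝ)) a) v : ℝ)
      = ∑ i, a i * v i := by
    rw [PiLp.inner_apply]
    simp only [RCLike.inner_apply, conj_trivial]
    exact Finset.sum_congr rfl (fun i _ => by rw [mul_comm]; rfl)
  rw [ha, hi, neg_div, Finset.sum_div, ← Finset.sum_neg_distrib, ← Finset.sum_add_distrib]
  exact Finset.sum_congr rfl (fun i _ => by rw [neg_div])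

lemma gaussd_integral (d : ℕ) (v : EuclideanSpace ℝ (Fin d)) :
    ∫ ω : EuclideanSpace ℝ (Fin d),
      (2*Real.pi) ^ (-(d:ℝ)/2) * Real.exp (-‖ω‖^2/2) * Real.exp ((inner ℝ ω v : ℝ))
      = Real.exp (‖v‖^2/2) := by
  rw [← (show MeasurePreserving (MeasurableEquiv.toLp 2 (Fin d → ℝ)) volume volume from by exact (EuclideanSpace.volume_preserving_symm_measurableEquiv_toLp (Fin d)).symm).integral_comp']
  simp_rw [key_eq]
  rw [MeasureTheory.integral_fintype_prod_volume_eq_prod (f := fun (i : Fin d) (t : ℝ) =>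
    (2*Real.pi) ^ (-(1:ℝ)/2) * Real.exp (-t^2/2 + t * v i))]
  simp_rw [gauss1d, ← Real.exp_sum]
  rw [norm_sq_eq, Finset.sum_div]

lemma gaussd_integrable (d : ℕ) (v : EuclideanSpace ℝ (Fin d)) :
    Integrable (fun ω : EuclideanSpace ℝ (Fin d) =>
      (2*Real.pi) ^ (-(d:ℝ)/2) * Real.exp (-‖ω‖^2/2) * Real.exp ((inner ℝ ω v : ℝ))) := by
  rw [← MeasurePreserving.integrable_comp_emb
    (show MeasurePreserving (MeasurableEquiv.toLp 2 (Fin d → ℝ)) volume volume from by exact (EuclideanSpace.volume_preserving_symm_measurableEquiv_toLp (Fin d)).symm)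
    (MeasurableEquiv.measurableEmbedding _)]
  have : ((fun ω : EuclideanSpace ℝ (Fin d) =>
      (2*Real.pi) ^ (-(d:ℝ)/2) * Real.exp (-‖ω‖^2/2) * Real.exp ((inner ℝ ω v : ℝ))) ∘
      (MeasurableEquiv.toLp 2 (Fin d → ℝ)))
      = fun a : Fin d → ℝ =>
        ∏ i, ((2*Real.pi) ^ (-(1:ℝ)/2) * Real.exp (-(a i)^2/2 + a i * v i)) :=
    funext (fun a => key_eq d v a)
  rw [this]
  exact MeasureTheory.Integrable.fintype_prod (f := fun (i : Fin d) (t : ℝ) =>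
    (2*Real.pi) ^ (-(1:ℝ)/2) * Real.exp (-t^2/2 + t * v i))
    (fun i => (gauss1d_integrable (v i)).const_mul _)


lemma density_meas (d : ℕ) : Measurable (fun ω : EuclideanSpace ℝ (Fin d) =>
    ((2 * Real.pi) ^ (-(d : ℝ) / 2) * Real.exp (-‖ω‖ ^ 2 / 2)).toNNReal) := by
  apply Measurable.real_toNNReal
  exact (measurable_const.mul ((measurable_norm.pow_const 2).neg.div_const 2).exp)

lemma integral_stdGaussian (d : ℕ) (v : EuclideanSpace ℝ (Fin d)) :
    ∫ ω, Real.exp ((inner ℝ ω v : ℝ)) ∂(stdGaussian d) = Real.exp (‖v‖^2/2) := by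
  rw [stdGaussian]
  rw [show (fun ω : EuclideanSpace ℝ (Fin d) =>
      ENNReal.ofReal ((2 * Real.pi) ^ (-(d : ℝ) / 2) * Real.exp (-‖ω‖ ^ 2 / 2)))
    = fun ω => (((2 * Real.pi) ^ (-(d : ℝ) / 2) * Real.exp (-‖ω‖ ^ 2 / 2)).toNNReal : ℝ≥0∞)
    from rfl]
  rw [integral_withDensity_eq_integral_smul (density_meas d)]
  rw [← gaussd_integral d v]
  congr 1; ext ω
  rw [NNReal.smul_def, smul_eq_mul, Real.coe_toNNReal _ (by positivity)]

lemma integrable_exp_stdGaussian (d : ℕ) (v : EuclideanSpace ℝ (Fin d)) :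
    Integrable (fun ω => Real.exp ((inner ℝ ω v : ℝ))) (stdGaussian d) := by
  rw [stdGaussian]
  rw [show (fun ω : EuclideanSpace ℝ (Fin d) =>
      ENNReal.ofReal ((2 * Real.pi) ^ (-(d : ℝ) / 2) * Real.exp (-‖ω‖ ^ 2 / 2)))
    = fun ω => (((2 * Real.pi) ^ (-(d : ℝ) / 2) * Real.exp (-‖ω‖ ^ 2 / 2)).toNNReal : ℝ≥0∞)
    from rfl]
  rw [integrable_withDensity_iff_integrable_smul (density_meas d)]
  have := gaussd_integrable d v
  apply this.congr
  filter_upwards with ω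
  rw [NNReal.smul_def, smul_eq_mul, Real.coe_toNNReal _ (by positivity)]

instance stdGaussian_prob (d : ℕ) : IsProbabilityMeasure (stdGaussian d) := by
  constructor
  rw [stdGaussian, withDensity_apply _ MeasurableSet.univ, setLIntegral_univ]
  have h0 := gaussd_integral d 0
  simp only [inner_zero_right, Real.exp_zero, mul_one, norm_zero] at h0
  have hint := gaussd_integrable d 0
  simp only [inner_zero_right, Real.exp_zero, mul_one] at hint
  rw [← MeasureTheory.ofReal_integral_eq_lintegral_ofReal hint
    (Filter.Eventually.of_forall fun ω => by positivity), h0]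
  norm_num

lemma integrable_eval_pi {α : Type*} [MeasurableSpace α] {μ : Measure α}
    [IsProbabilityMeasure μ] {m : ℕ} {g : α → ℝ} (hg : Integrable g μ) (i : Fin m) :
    Integrable (fun x : Fin m → α => g (x i)) (Measure.pi fun _ => μ) := by
  letI : MeasureSpace α := ⟨μ⟩
  have h : (fun x : Fin m → α => g (x i))
      = fun x : Fin m → α => ∏ j, (if j = i then g (x j) else 1) := by
    ext x; rw [Finset.prod_ite_eq' Finset.univ i (fun j => g (x j))]; simp
  rw [h, show (Measure.pi fun _ : Fin m => μ) = (volume : Measure (Fin m → α)) from rfl]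
  exact MeasureTheory.Integrable.fintype_prod
    (f := fun j a => if j = i then g a else 1)
    (fun j => by
      rcases eq_or_ne j i with hji | hji
      · simp only [hji, if_pos rfl]; exact hg
      · simp only [if_neg hji]; exact integrable_const 1)

lemma integral_eval_pi {α : Type*} [MeasurableSpace α] {μ : Measure α}
    [IsProbabilityMeasure μ] {m : ℕ} (g : α → ℝ) (i : Fin m) :
    ∫ x : Fin m → α, g (x i) ∂(Measure.pi fun _ => μ) = ∫ a, g a ∂μ := by
  letI : MeasureSpace α := ⟨μ⟩
  have h : (fun x : Fin m → α => g (x i))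
      = fun x : Fin m → α => ∏ j, (if j = i then g (x j) else 1) := by
    ext x; rw [Finset.prod_ite_eq' Finset.univ i (fun j => g (x j))]; simp
  rw [h, show (Measure.pi fun _ : Fin m => μ) = Measure.pi (fun _ => (volume : Measure α)) from rfl,
    MeasureTheory.integral_fintype_prod_eq_prod
    (f := fun j a => if j = i then g a else 1)]
  have hj : ∀ j : Fin m, (∫ x : α, if j = i then g x else 1) = if j = i then ∫ a, g a ∂μ else 1 := by
    intro j
    rcases eq_or_ne j i with hji | hji
    · simp only [hji, if_pos rfl]; rfl
    · simp [hji]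
  simp_rw [hj]
  simp [Finset.prod_ite_eq']

/-- For the random feature map
`φ_exp(x) = (1/√m)·exp(−‖x‖²/2)·(exp(ω₁ᵀx), …, exp(ω_mᵀx))` with `ω₁, …, ω_m` i.i.d.
standard Gaussians, `E[φ_exp(x)ᵀ φ_exp(y)] = exp(xᵀy)`:  `φ_exp` is an unbiased
estimator of the softmax (exponential) attention kernel. -/
theorem performer_exp_unbiased (d m : ℕ) (hd : 0 < d) (hm : 0 < m)
    (x y : EuclideanSpace ℝ (Fin d)) :
    ∫ ω : Fin m → EuclideanSpace ℝ (Fin d),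
      (∑ i : Fin m,
        ((Real.sqrt m)⁻¹ * Real.exp (-‖x‖ ^ 2 / 2) * Real.exp ((inner ℝ (ω i) x : ℝ))) *
        ((Real.sqrt m)⁻¹ * Real.exp (-‖y‖ ^ 2 / 2) * Real.exp ((inner ℝ (ω i) y : ℝ))))
      ∂(Measure.pi fun _ : Fin m => stdGaussian d)
    = Real.exp ((inner ℝ x y : ℝ)) := by
  have hm' : (m : ℝ) ≠ 0 := Nat.cast_ne_zero.mpr hm.ne'
  have hs : (Real.sqrt m)⁻¹ * (Real.sqrt m)⁻¹ = (m : ℝ)⁻¹ := by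
    rw [← mul_inv, Real.mul_self_sqrt (Nat.cast_nonneg m)]
  have hF : ∀ a : EuclideanSpace ℝ (Fin d),
      ((Real.sqrt m)⁻¹ * Real.exp (-‖x‖ ^ 2 / 2) * Real.exp ((inner ℝ a x : ℝ))) *
      ((Real.sqrt m)⁻¹ * Real.exp (-‖y‖ ^ 2 / 2) * Real.exp ((inner ℝ a y : ℝ)))
      = ((m : ℝ)⁻¹ * Real.exp (-‖x‖ ^ 2 / 2 + -‖y‖ ^ 2 / 2)) *
        Real.exp ((inner ℝ a (x + y) : ℝ)) := by
    intro a
    rw [inner_add_right, Real.exp_add, Real.exp_add]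
    rw [← hs]; ring
  simp_rw [hF]
  rw [integral_finset_sum _ (fun i _ => integrable_eval_pi
    ((integrable_exp_stdGaussian d (x + y)).const_mul _) i)]
  have hterm : ∀ i : Fin m,
      ∫ ω : Fin m → EuclideanSpace ℝ (Fin d),
        ((m : ℝ)⁻¹ * Real.exp (-‖x‖ ^ 2 / 2 + -‖y‖ ^ 2 / 2)) *
          Real.exp ((inner ℝ (ω i) (x + y) : ℝ)) ∂(Measure.pi fun _ : Fin m => stdGaussian d)
      = ((m : ℝ)⁻¹ * Real.exp (-‖x‖ ^ 2 / 2 + -‖y‖ ^ 2 / 2)) * Real.exp (‖x + y‖ ^ 2 / 2) := by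
    intro i
    rw [integral_eval_pi (fun a : EuclideanSpace ℝ (Fin d) =>
      ((m : ℝ)⁻¹ * Real.exp (-‖x‖ ^ 2 / 2 + -‖y‖ ^ 2 / 2)) *
        Real.exp ((inner ℝ a (x + y) : ℝ))) i]
    rw [integral_const_mul, integral_stdGaussian]
  simp_rw [hterm]
  rw [Finset.sum_const, Finset.card_univ, Fintype.card_fin, nsmul_eq_mul]
  have hsum : (-‖x‖ ^ 2 / 2 + -‖y‖ ^ 2 / 2) + ‖x + y‖ ^ 2 / 2 = (inner ℝ x y : ℝ) := by
    rw [norm_add_sq_real]; ring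
  rw [← hsum, Real.exp_add, ← mul_assoc, ← mul_assoc, mul_inv_cancel₀ hm', one_mul, Real.exp_add, Real.exp_add]
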